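/- For fixed n ≥ 0, Σ_{k=0}^{n} (-1)^k u_r(n,n-k) t^k = Π_{j=0}^{n-1} (1 + (j²+r)t), as an identity of polynomials in t. -/
import Mathlib


/-- `centralu r n k` is the r-central factorial number with even indices of the first kind. -/
def centralu (r : ℕ) : ℕ → ℕ → ℤ
  | 0, 0 => 1
  | 0, _ + 1 => 0
  | n + 1, 0 => (-1) ^ (n + 1) * ∏ i ∈ Finset.range (n + 1), ((i : ℤ) ^ 2 + r)
  | n + 1, k + 1 => centralu r n k - ((n : ℤ) ^ 2 + r) * centralu r n (k + 1)

lemma centralu_succ_succ (r n k : ℕ) :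
    centralu r (n + 1) (k + 1) = centralu r n k - ((n : ℤ) ^ 2 + r) * centralu r n (k + 1) := rfl

lemma centralu_zero' (r n : ℕ) :
    centralu r n 0 = (-1) ^ n * ∏ i ∈ Finset.range n, ((i : ℤ) ^ 2 + r) := by
  cases n <;> simp [centralu]

lemma centralu_zero_succ (r n : ℕ) :
    centralu r (n + 1) 0 = -(((n : ℤ) ^ 2 + r)) * centralu r n 0 := by
  rw [centralu_zero', centralu_zero', Finset.prod_range_succ]
  ring

lemma centralu_eq_zero (r : ℕ) : ∀ n k : ℕ, n < k → centralu r n k = 0 := by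
  intro n
  induction n with
  | zero => intro k hk; match k, hk with | k + 1, _ => rfl
  | succ n ih =>
    intro k hk
    match k, hk with
    | k + 1, hk =>
      rw [centralu_succ_succ, ih k (by omega), ih (k + 1) (by omega)]
      ring

theorem centralu_gen_fun (r n : ℕ) (t : ℝ) :
    ∑ k ∈ Finset.range (n + 1), (-1 : ℝ) ^ k * (centralu r n (n - k) : ℝ) * t ^ k =
      ∏ j ∈ Finset.range n, (1 + ((j : ℝ) ^ 2 + r) * t) := by
  induction n with
  | zero => simp [centralu]
  | succ n ih =>
    rw [Finset.prod_range_succ, ← ih, Finset.sum_range_succ]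
    have h0 : ∀ k ∈ Finset.range (n + 1),
        (-1 : ℝ) ^ k * (centralu r (n + 1) (n + 1 - k) : ℝ) * t ^ k
          = (-1 : ℝ) ^ k * (centralu r n (n - k) : ℝ) * t ^ k
            - ((n : ℝ) ^ 2 + r) * ((-1 : ℝ) ^ k * (centralu r n (n - k + 1) : ℝ) * t ^ k) := by
      intro k hk
      have hk' : k ≤ n := Nat.lt_succ_iff.mp (Finset.mem_range.mp hk)
      have hnk : n + 1 - k = (n - k) + 1 := by omega
      rw [hnk, centralu_succ_succ]
      push_cast
      ring
    rw [Finset.sum_congr rfl h0, Finset.sum_sub_distrib, ← Finset.mul_sum]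
    have h1 : ∑ k ∈ Finset.range (n + 1),
        (-1 : ℝ) ^ k * (centralu r n (n - k + 1) : ℝ) * t ^ k
          = (∑ i ∈ Finset.range n,
              (-1 : ℝ) ^ (i + 1) * (centralu r n (n - i) : ℝ) * t ^ (i + 1))
            + (-1 : ℝ) ^ 0 * (centralu r n (n - 0 + 1) : ℝ) * t ^ 0 := by
      rw [Finset.sum_range_succ']
      congr 1
      refine Finset.sum_congr rfl fun i hi => ?_
      have : n - (i + 1) + 1 = n - i := by
        have := Finset.mem_range.mp hi; omega
      rw [this]
    rw [h1]
    have h2 : (centralu r n (n - 0 + 1) : ℝ) = 0 := by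
      rw [centralu_eq_zero r n (n - 0 + 1) (by omega)]; norm_cast
    rw [h2]
    have h3 : ∑ i ∈ Finset.range n,
        (-1 : ℝ) ^ (i + 1) * (centralu r n (n - i) : ℝ) * t ^ (i + 1)
          = -t * ∑ i ∈ Finset.range n, (-1 : ℝ) ^ i * (centralu r n (n - i) : ℝ) * t ^ i := by
      rw [Finset.mul_sum]
      refine Finset.sum_congr rfl fun i _ => ?_
      ring
    rw [h3]
    have h4 : ∑ i ∈ Finset.range n, (-1 : ℝ) ^ i * (centralu r n (n - i) : ℝ) * t ^ i
        = (∑ k ∈ Finset.range (n + 1), (-1 : ℝ) ^ k * (centralu r n (n - k) : ℝ) * t ^ k)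
          - (-1 : ℝ) ^ n * (centralu r n 0 : ℝ) * t ^ n := by
      rw [Finset.sum_range_succ]
      simp
    rw [h4]
    have h5 : (centralu r (n + 1) 0 : ℝ) = -((n : ℝ) ^ 2 + r) * (centralu r n 0 : ℝ) := by
      rw [centralu_zero_succ]; push_cast; ring
    simp only [Nat.sub_self] at *
    rw [h5]
    ring
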